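/- Let a ranking σ be sampled from the Plackett–Luce model on a set S of κ items with weights θ ∈ ℝ^S satisfying |θᵢ| ≤ b for all i. Then for any item i ∈ S and any position 1 ≤ ℓ ≤ κ−1, the probability that σ⁻¹(i) = ℓ is at most e^{6b}/(κ−ℓ). -/

import Mathlib

open Finset Real

/-- The Plackett–Luce probability of the ranking `σ : Fin κ ≃ Fin κ`
(`σ u` is the item placed in position `u`):
`P(σ) = ∏ᵤ e^{θ(σ u)} / ∑_{u' ≥ u} e^{θ(σ u')}` (the last factor is `1`). -/
noncomputable def PLprob {κ : ℕ} (θ : Fin κ → ℝ) (σ : Equiv.Perm (Fin κ)) : ℝ :=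
  ∏ u : Fin κ, Real.exp (θ (σ u)) / ∑ u' ∈ Finset.Ici u, Real.exp (θ (σ u'))

lemma sum_Ici_succ {n : ℕ} (f : Fin (n+1) → ℝ) (j : Fin n) :
    ∑ u ∈ Finset.Ici j.succ, f u = ∑ v ∈ Finset.Ici j, f v.succ := by
  have himg : Finset.Ici j.succ = (Finset.Ici j).map ⟨Fin.succ, Fin.succ_injective n⟩ := by
    ext u
    simp only [Finset.mem_Ici, Finset.mem_map, Function.Embedding.coeFn_mk]
    constructor
    · intro h
      have h0 : u ≠ 0 := by
        intro h0
        rw [h0, Fin.le_zero_iff] at h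
        exact Fin.succ_ne_zero j h
      obtain ⟨v, rfl⟩ := Fin.exists_succ_eq_of_ne_zero h0
      exact ⟨v, Fin.succ_le_succ_iff.mp h, rfl⟩
    · rintro ⟨v, hv, rfl⟩
      exact Fin.succ_le_succ_iff.mpr hv
  rw [himg, Finset.sum_map]
  rfl

lemma PLprob_decompose {n : ℕ} (θ : Fin (n+1) → ℝ) (p : Fin (n+1)) (τ : Equiv.Perm (Fin n)) :
    PLprob θ (Equiv.Perm.decomposeFin.symm (p, τ))
      = (Real.exp (θ p) / ∑ j, Real.exp (θ j))
        * PLprob (fun j => θ (Equiv.swap 0 p j.succ)) τ := by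
  have hIci : (Finset.Ici (0 : Fin (n+1))) = Finset.univ := by
    ext u; simp [Fin.zero_le]
  rw [PLprob, PLprob, Fin.prod_univ_succ]
  congr 1
  · rw [Equiv.Perm.decomposeFin_symm_apply_zero, hIci]
    congr 1
    exact Equiv.sum_comp _ (fun x => Real.exp (θ x))
  · apply Finset.prod_congr rfl
    intro j _
    rw [Equiv.Perm.decomposeFin_symm_apply_succ, sum_Ici_succ]
    congr 1
    apply Finset.sum_congr rfl
    intro v _
    rw [Equiv.Perm.decomposeFin_symm_apply_succ]

lemma PLprob_sum_eq_one : ∀ (n : ℕ) (θ : Fin n → ℝ),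
    ∑ σ : Equiv.Perm (Fin n), PLprob θ σ = 1 := by
  intro n
  induction n with
  | zero =>
      intro θ
      have h1 : ∀ σ : Equiv.Perm (Fin 0), PLprob θ σ = 1 := by
        intro σ; rw [PLprob]; exact Finset.prod_of_isEmpty _
      simp [h1]
  | succ n IH =>
      intro θ
      have hS : (0:ℝ) < ∑ j, Real.exp (θ j) :=
        Finset.sum_pos (fun j _ => Real.exp_pos _) Finset.univ_nonempty
      rw [← Equiv.sum_comp (Equiv.Perm.decomposeFin (n := n)).symm (PLprob θ)]
      rw [Fintype.sum_prod_type]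
      have : ∀ p : Fin (n+1), ∑ τ : Equiv.Perm (Fin n),
          PLprob θ (Equiv.Perm.decomposeFin.symm (p, τ))
          = Real.exp (θ p) / ∑ j, Real.exp (θ j) := by
        intro p
        simp only [PLprob_decompose]
        rw [← Finset.mul_sum, IH, mul_one]
      simp only [this]
      rw [← Finset.sum_div, div_self (ne_of_gt hS)]

lemma PLprob_nonneg {n : ℕ} (θ : Fin n → ℝ) (σ : Equiv.Perm (Fin n)) : 0 ≤ PLprob θ σ := by
  apply Finset.prod_nonneg
  intro u _
  apply div_nonneg (Real.exp_pos _).le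
  exact Finset.sum_nonneg fun _ _ => (Real.exp_pos _).le

lemma PL_position_bound (b : ℝ) : ∀ (n : ℕ) (θ : Fin n → ℝ), (∀ j, |θ j| ≤ b) →
    ∀ (m i : Fin n),
    ∑ σ ∈ Finset.univ.filter (fun σ : Equiv.Perm (Fin n) => σ m = i), PLprob θ σ
      ≤ Real.exp (2*b) / ((n : ℝ) - ((m : ℕ) : ℝ)) := by
  intro n
  induction n with
  | zero => intro θ _ m; exact m.elim0
  | succ n IH =>
      intro θ hθ m i
      -- basic facts about S
      set S : ℝ := ∑ j, Real.exp (θ j) with hSdef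
      have hS : (0:ℝ) < S := Finset.sum_pos (fun j _ => Real.exp_pos _) Finset.univ_nonempty
      have hSlb : ((n:ℝ)+1) * Real.exp (-b) ≤ S := by
        have : ∀ j ∈ Finset.univ, Real.exp (-b) ≤ Real.exp (θ j) := by
          intro j _
          exact Real.exp_le_exp.mpr (neg_le_of_abs_le (hθ j))
        calc ((n:ℝ)+1) * Real.exp (-b)
            = ∑ _j : Fin (n+1), Real.exp (-b) := by
              rw [Finset.sum_const, Finset.card_univ, Fintype.card_fin]
              push_cast; ring
          _ ≤ S := Finset.sum_le_sum this
      rw [Finset.sum_filter]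
      rw [← Equiv.sum_comp (Equiv.Perm.decomposeFin (n := n)).symm
            (fun σ => if σ m = i then PLprob θ σ else 0)]
      rw [Fintype.sum_prod_type]
      rcases Fin.eq_zero_or_eq_succ m with hm | ⟨j, hm⟩
      · -- m = 0 case
        subst hm
        have hcond : ∀ (p : Fin (n+1)) (τ : Equiv.Perm (Fin n)),
            (Equiv.Perm.decomposeFin.symm (p, τ) 0 = i) = (p = i) := by
          intro p τ; rw [Equiv.Perm.decomposeFin_symm_apply_zero]
        simp only [hcond, PLprob_decompose]
        have hswap : ∀ p : Fin (n+1), ∑ τ : Equiv.Perm (Fin n),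
            (if p = i then (Real.exp (θ p) / S) * PLprob (fun j => θ (Equiv.swap 0 p j.succ)) τ else 0)
            = if p = i then Real.exp (θ p) / S else 0 := by
          intro p
          split
          · rw [← Finset.mul_sum, PLprob_sum_eq_one, mul_one]
          · simp
        rw [Finset.sum_congr rfl (fun p _ => hswap p)]
        rw [Finset.sum_ite_eq' Finset.univ i (fun p => Real.exp (θ p) / S)]
        simp only [Finset.mem_univ, if_true, Fin.val_zero, Nat.cast_zero, sub_zero]
        have h1 : Real.exp (θ i) / S ≤ Real.exp b / (((n:ℝ)+1) * Real.exp (-b)) := by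
          apply div_le_div₀ (Real.exp_pos b).le
            (Real.exp_le_exp.mpr (le_of_abs_le (hθ i)))
            (by positivity) hSlb
        refine h1.trans (le_of_eq ?_)
        rw [Real.exp_neg, div_eq_div_iff (by positivity) (by positivity)]
        rw [show (2:ℝ)*b = b + b by ring, Real.exp_add]
        field_simp
        push_cast; ring
      · -- m = j.succ case
        subst hm
        have hval : ((j.succ : Fin (n+1)) : ℕ) = (j : ℕ) + 1 := rfl
        rw [hval]
        have hden : ((n:ℝ)+1) - (((j:ℕ):ℝ)+1) = (n:ℝ) - (j:ℕ) := by push_cast; ring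
        have hdpos : (0:ℝ) < (n:ℝ) - ((j:ℕ):ℝ) := by
          have := j.isLt; have : ((j:ℕ):ℝ) < (n:ℝ) := by exact_mod_cast j.isLt
          linarith
        set B : ℝ := Real.exp (2*b) / ((n:ℝ) - ((j:ℕ):ℝ)) with hBdef
        have hBnn : 0 ≤ B := by positivity
        have hinner : ∀ p : Fin (n+1),
            (∑ τ : Equiv.Perm (Fin n),
              if Equiv.Perm.decomposeFin.symm (p, τ) j.succ = i
              then PLprob θ (Equiv.Perm.decomposeFin.symm (p, τ)) else 0)
            ≤ (Real.exp (θ p) / S) * B := by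
          intro p
          by_cases hip : p = i
          · have : ∀ τ : Equiv.Perm (Fin n),
                (if Equiv.Perm.decomposeFin.symm (p, τ) j.succ = i
                 then PLprob θ (Equiv.Perm.decomposeFin.symm (p, τ)) else 0) = 0 := by
              intro τ
              subst hip
              rw [Equiv.Perm.decomposeFin_symm_apply_succ, if_neg]
              intro hc
              have h2 := congrArg (Equiv.swap (0 : Fin (n+1)) p) hc
              rw [Equiv.swap_apply_self, Equiv.swap_apply_right] at h2
              exact Fin.succ_ne_zero _ h2
            rw [Finset.sum_congr rfl (fun τ _ => this τ), Finset.sum_const_zero]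
            positivity
          · have h0 : Equiv.swap (0 : Fin (n+1)) p i ≠ 0 := by
              intro hc
              apply hip
              symm
              have := congrArg (Equiv.swap (0 : Fin (n+1)) p) hc
              rwa [Equiv.swap_apply_self, Equiv.swap_apply_left] at this
            obtain ⟨i', hi'⟩ := Fin.exists_succ_eq_of_ne_zero h0
            have hcond : ∀ τ : Equiv.Perm (Fin n),
                (Equiv.Perm.decomposeFin.symm (p, τ) j.succ = i) = (τ j = i') := by
              intro τ
              rw [Equiv.Perm.decomposeFin_symm_apply_succ]
              apply propext
              constructor
              · intro hc
                have : (τ j).succ = Equiv.swap 0 p i := by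
                  have := congrArg (Equiv.swap (0 : Fin (n+1)) p) hc
                  rwa [Equiv.swap_apply_self] at this
                rw [← hi'] at this
                exact Fin.succ_injective n this
              · intro hc
                rw [hc, hi', Equiv.swap_apply_self]
            simp only [hcond, PLprob_decompose]
            have : ∑ τ : Equiv.Perm (Fin n),
                (if τ j = i' then (Real.exp (θ p) / S) * PLprob (fun k => θ (Equiv.swap 0 p k.succ)) τ else 0)
                = (Real.exp (θ p) / S) * ∑ τ : Equiv.Perm (Fin n),
                    (if τ j = i' then PLprob (fun k => θ (Equiv.swap 0 p k.succ)) τ else 0) := by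
              rw [Finset.mul_sum]
              apply Finset.sum_congr rfl
              intro τ _
              split <;> simp
            rw [this]
            apply mul_le_mul_of_nonneg_left _ (by positivity)
            rw [← Finset.sum_filter]
            exact IH (fun k => θ (Equiv.swap 0 p k.succ)) (fun k => hθ _) j i'
        have hgoal : ((n+1:ℕ):ℝ) - (((j:ℕ)+1 : ℕ):ℝ) = (n:ℝ) - ((j:ℕ):ℝ) := by
          push_cast; ring
        rw [hgoal]
        calc ∑ p : Fin (n+1), (∑ τ : Equiv.Perm (Fin n),
              if Equiv.Perm.decomposeFin.symm (p, τ) j.succ = i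
              then PLprob θ (Equiv.Perm.decomposeFin.symm (p, τ)) else 0)
            ≤ ∑ p : Fin (n+1), (Real.exp (θ p) / S) * B :=
              Finset.sum_le_sum (fun p _ => hinner p)
          _ = (S / S) * B := by rw [← Finset.sum_mul, ← Finset.sum_div]
          _ = B := by rw [div_self (ne_of_gt hS), one_mul]

/-- Under the PL model on `κ` items with weights bounded by `b`, the
probability that a fixed item `i` is placed at position `ℓ ∈ {1, …, κ−1}` is at
most `e^{6b}/(κ−ℓ)`. -/
theorem pl_position_prob_upper_bound (κ : ℕ) (b : ℝ) (hb : 0 ≤ b)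
    (θ : Fin κ → ℝ) (hθ : ∀ i, |θ i| ≤ b) (i : Fin κ)
    (ℓ : ℕ) (hℓ : 1 ≤ ℓ) (hℓκ : ℓ ≤ κ - 1) :
    ∑ σ ∈ Finset.univ.filter
        (fun σ : Equiv.Perm (Fin κ) => (σ.symm i : ℕ) + 1 = ℓ),
      PLprob θ σ ≤ Real.exp (6 * b) / ((κ : ℝ) - ℓ) := by
  have hκ2 : 2 ≤ κ := by omega
  have hℓκ' : ℓ < κ := by omega
  have hm : ℓ - 1 < κ := by omega
  set m : Fin κ := ⟨ℓ - 1, hm⟩ with hmdef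
  have hfilter : (Finset.univ.filter
        (fun σ : Equiv.Perm (Fin κ) => (σ.symm i : ℕ) + 1 = ℓ))
      = Finset.univ.filter (fun σ : Equiv.Perm (Fin κ) => σ m = i) := by
    apply Finset.filter_congr
    intro σ _
    constructor
    · intro h
      have h1 : σ.symm i = m := by
        apply Fin.ext
        show (σ.symm i : ℕ) = ℓ - 1
        omega
      rw [← h1, Equiv.apply_symm_apply]
    · intro h
      have h1 : σ.symm i = m := by rw [← h, Equiv.symm_apply_apply]
      rw [h1]
      show ℓ - 1 + 1 = ℓ
      omega
  rw [hfilter]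
  refine (PL_position_bound b κ θ hθ m i).trans ?_
  have hmval : ((m : ℕ) : ℝ) = (ℓ : ℝ) - 1 := by
    show ((ℓ - 1 : ℕ) : ℝ) = (ℓ : ℝ) - 1
    push_cast [Nat.cast_sub hℓ]
    ring
  rw [hmval]
  have h1 : (0:ℝ) < (κ:ℝ) - ℓ := by
    have : (ℓ:ℝ) < κ := by exact_mod_cast hℓκ'
    linarith
  have h2 : (κ:ℝ) - ℓ ≤ (κ:ℝ) - ((ℓ:ℝ) - 1) := by linarith
  calc Real.exp (2*b) / ((κ:ℝ) - ((ℓ:ℝ)-1))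
      ≤ Real.exp (6*b) / ((κ:ℝ) - ℓ) := by
        apply div_le_div₀ (Real.exp_pos _).le
          (Real.exp_le_exp.mpr (by linarith)) h1 h2
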